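/- Let T̄ be a graph on a vertex set of size n with local Cheeger constant h_ε(T̄) ≥ α, arising as the contracted Tanner graph of Pauli operators of weight at most w. If L is a set of qubits of a circuit whose data-qubit part satisfies |D ∩ L| ≤ εn/2, then the number of measured operators supported on both sides of the cut satisfies n_cut ≥ (2α / (w(w−1)))·|D ∩ L|. -/

import Mathlib

/-!
STATEMENT 6: Let `T̄` be the contracted Tanner graph on `n` qubits of a family of Pauli
operators of weight at most `w` (modelled by their supports), and suppose the local Cheeger
constant satisfies `h_ε(T̄) ≥ α`, i.e. `|∂_{T̄} A| ≥ α|A|` for every `A` with `|A| ≤ εn/2`.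
If `L` is a set of qubits of a circuit whose data-qubit part `D ∩ L` (modelled below by the
finset `DL` of data qubits in `L`) satisfies `|D ∩ L| ≤ εn/2`, then the number `n_cut` of
measured operators supported on both sides of the cut satisfies
`n_cut ≥ (2α / (w(w−1)))·|D ∩ L|`.
-/

attribute [local instance] Classical.propDecidable

open Finset

/-- The set of edges of `G` with exactly one endpoint in `L`. -/
noncomputable def edgeBoundary {V : Type*} [Fintype V] (G : SimpleGraph V) (L : Finset V) :
    Finset (Sym2 V) :=
  Finset.univ.filter (fun e => e ∈ G.edgeSet ∧ ∃ a b, e = s(a, b) ∧ a ∈ L ∧ b ∉ L)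

/-- The contracted Tanner graph of a family of operators given by their supports. -/
noncomputable def contractedTanner {Q : Type*} {r : ℕ} (S : Fin r → Finset Q) :
    SimpleGraph Q :=
  SimpleGraph.fromRel (fun q q' => ∃ i, q ∈ S i ∧ q' ∈ S i)

theorem stmt6 (n r w : ℕ) (α ε : ℝ) (hα : 0 < α) (hε0 : 0 ≤ ε) (hε1 : ε ≤ 1)
    -- the supports of the measured Pauli operators, each of weight at most `w`
    (S : Fin r → Finset (Fin n))
    (hw : ∀ i, (S i).card ≤ w)
    -- local Cheeger constant bound `h_ε(T̄) ≥ α`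
    (hexp : ∀ A : Finset (Fin n), (A.card : ℝ) ≤ ε * n / 2 →
      α * (A.card : ℝ) ≤ ((edgeBoundary (contractedTanner S) A).card : ℝ))
    -- `DL` is the data-qubit part `D ∩ L` of the cut
    (DL : Finset (Fin n)) (hDL : (DL.card : ℝ) ≤ ε * n / 2) :
    ((Finset.univ.filter
        (fun i : Fin r => (S i ∩ DL).Nonempty ∧ (S i \ DL).Nonempty)).card : ℝ)
      ≥ (2 * α / ((w : ℝ) * ((w : ℝ) - 1))) * (DL.card : ℝ) := by
  set Cut := Finset.univ.filter
      (fun i : Fin r => (S i ∩ DL).Nonempty ∧ (S i \ DL).Nonempty) with hCut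
  by_cases hw2 : 2 ≤ w
  · -- main case
    have hsub : edgeBoundary (contractedTanner S) DL ⊆
        Cut.biUnion (fun i => (S i).offDiag.image Sym2.mk.uncurry) := by
      intro e he
      simp only [edgeBoundary, Finset.mem_filter, Finset.mem_univ, true_and] at he
      obtain ⟨hadj, a, b, rfl, haL, hbL⟩ := he
      rw [SimpleGraph.mem_edgeSet] at hadj
      rw [contractedTanner, SimpleGraph.fromRel_adj] at hadj
      obtain ⟨hab, hrel⟩ := hadj
      obtain ⟨i, hai, hbi⟩ : ∃ i, a ∈ S i ∧ b ∈ S i := by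
        rcases hrel with ⟨i, h1, h2⟩ | ⟨i, h1, h2⟩
        · exact ⟨i, h1, h2⟩
        · exact ⟨i, h2, h1⟩
      refine Finset.mem_biUnion.2 ⟨i, ?_, ?_⟩
      · simp only [hCut, Finset.mem_filter, Finset.mem_univ, true_and]
        exact ⟨⟨a, Finset.mem_inter.2 ⟨hai, haL⟩⟩, ⟨b, Finset.mem_sdiff.2 ⟨hbi, hbL⟩⟩⟩
      · exact Finset.mem_image.2 ⟨(a, b), Finset.mem_offDiag.2 ⟨hai, hbi, hab⟩, rfl⟩
    have hcard : (edgeBoundary (contractedTanner S) DL).card ≤ Cut.card * w.choose 2 := by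
      calc (edgeBoundary (contractedTanner S) DL).card
          ≤ (Cut.biUnion (fun i => (S i).offDiag.image Sym2.mk.uncurry)).card :=
            Finset.card_le_card hsub
        _ ≤ ∑ i ∈ Cut, ((S i).offDiag.image Sym2.mk.uncurry).card := Finset.card_biUnion_le
        _ ≤ ∑ i ∈ Cut, w.choose 2 := by
            refine Finset.sum_le_sum fun i _ => ?_
            rw [Sym2.card_image_offDiag]
            exact Nat.choose_le_choose 2 (hw i)
        _ = Cut.card * w.choose 2 := by rw [Finset.sum_const, smul_eq_mul]
    have hchoose : 2 * (w.choose 2 : ℝ) = (w : ℝ) * ((w : ℝ) - 1) := by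
      have h1 : 2 * w.choose 2 = w * (w - 1) := by
        rw [Nat.choose_two_right, Nat.mul_div_cancel' (Nat.even_mul_pred_self w).two_dvd]
      have h2 : ((w : ℝ) - 1) = ((w - 1 : ℕ) : ℝ) := by
        rw [Nat.cast_sub (by omega)]; norm_num
      rw [h2]
      exact_mod_cast congrArg (Nat.cast : ℕ → ℝ) h1
    have hB := hexp DL hDL
    have hcardR : ((edgeBoundary (contractedTanner S) DL).card : ℝ)
        ≤ (Cut.card : ℝ) * (w.choose 2 : ℝ) := by exact_mod_cast hcard
    have hpos : (0 : ℝ) < (w : ℝ) * ((w : ℝ) - 1) := by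
      have : (2 : ℝ) ≤ (w : ℝ) := by exact_mod_cast hw2
      nlinarith
    rw [ge_iff_le, div_mul_eq_mul_div, div_le_iff₀ hpos]
    nlinarith [hB, hcardR, hchoose]
  · -- degenerate case w ≤ 1
    interval_cases w
    · simp only [Nat.cast_zero]
      norm_num
    · simp only [Nat.cast_one]
      norm_num
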